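/- With notation as in the substitution proposition: a vector u ∈ Z^{n−1} lies in the integer kernel of A' (the first n−1 columns of P_{a_n}A) if and only if there exists k ∈ Z such that A·(u,−k) = 0, i.e., (u concatenated with −k) lies in the integer kernel of A. -/

import Mathlib

open Matrix

/-- The orthogonal projection matrix onto the hyperplane orthogonal to `v`. -/
noncomputable def projMat {r : ℕ} (v : Fin r → ℝ) : Matrix (Fin r) (Fin r) ℝ :=
  1 - (∑ i, v i * v i)⁻¹ • Matrix.vecMulVec v v


lemma projMat_mulVec {r : ℕ} (v x : Fin r → ℝ) :
    (projMat v).mulVec x = x - ((∑ i, v i * v i)⁻¹ * ∑ i, v i * x i) • v := by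
  funext i
  simp only [projMat, Matrix.sub_mulVec, Matrix.smul_mulVec, Matrix.one_mulVec,
    Pi.sub_apply, Pi.smul_apply, smul_eq_mul]
  have : (Matrix.vecMulVec v v).mulVec x i = v i * ∑ j, v j * x j := by
    simp [Matrix.mulVec, Matrix.vecMulVec, dotProduct, Finset.mul_sum, mul_assoc]
  rw [this]; ring

/-- `u` lies in the integer kernel of `A'` (the first `n-1` columns of `P_{aₙ}A`) iff
`(u, -k)` lies in the integer kernel of `A` for some integer `k`. -/
theorem intKer_projection {d m : ℕ} (A : Matrix (Fin d) (Fin (m + 1)) ℤ)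
    (ha : (fun i => A i (Fin.last m)) ≠ 0)
    (hgcd : Finset.univ.gcd (fun i => A i (Fin.last m)) = 1)
    (u : Fin m → ℤ) :
    (Matrix.of fun (i : Fin d) (j : Fin m) =>
        (projMat (fun i => (A i (Fin.last m) : ℝ)) * A.map ((↑) : ℤ → ℝ)) i j.castSucc).mulVec
        (fun j => (u j : ℝ)) = 0 ↔
      ∃ k : ℤ, A.mulVec (Fin.snoc u (-k)) = 0 := by
  set a : Fin d → ℤ := fun i => A i (Fin.last m) with ha_def
  set aR : Fin d → ℝ := fun i => (a i : ℝ) with haR_def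
  set w : Fin d → ℤ := A.mulVec (Fin.snoc u 0) with hw_def
  -- sum of squares positive
  obtain ⟨i0, hi0⟩ : ∃ i, a i ≠ 0 := by
    by_contra h; push_neg at h; exact ha (funext h)
  have hs : (0:ℝ) < ∑ i, aR i * aR i := by
    apply Finset.sum_pos' (fun i _ => mul_self_nonneg _)
    refine ⟨i0, Finset.mem_univ _, mul_self_pos.mpr ?_⟩
    show (a i0 : ℝ) ≠ 0
    exact_mod_cast hi0
  -- mulVec of snoc splits
  have hsnoc : ∀ (k : ℤ) (i : Fin d),
      A.mulVec (Fin.snoc u (-k)) i = w i - k * a i := by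
    intro k i
    simp only [hw_def, Matrix.mulVec, dotProduct, Fin.sum_univ_castSucc, Fin.snoc_castSucc,
      Fin.snoc_last]
    ring
  -- LHS equals projMat applied to cast of w
  have hcastw : (fun i => (w i : ℝ)) =
      (A.map ((↑) : ℤ → ℝ)).mulVec (Fin.snoc (fun j => (u j : ℝ)) 0) := by
    funext i
    simp only [hw_def, Matrix.mulVec, dotProduct, Matrix.map_apply, Fin.sum_univ_castSucc,
      Fin.snoc_castSucc, Fin.snoc_last]
    push_cast
    ring
  have hLHS : (Matrix.of fun (i : Fin d) (j : Fin m) =>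
        (projMat aR * A.map ((↑) : ℤ → ℝ)) i j.castSucc).mulVec
        (fun j => (u j : ℝ)) = (projMat aR).mulVec (fun i => (w i : ℝ)) := by
    rw [hcastw, Matrix.mulVec_mulVec]
    funext i
    simp only [Matrix.mulVec, dotProduct, Matrix.of_apply]
    rw [Fin.sum_univ_castSucc]
    simp [Fin.snoc_castSucc, Fin.snoc_last]
  rw [hLHS, projMat_mulVec]
  constructor
  · intro h
    set c : ℝ := (∑ i, aR i * aR i)⁻¹ * ∑ i, aR i * (w i : ℝ) with hc
    have hwc : ∀ i, (w i : ℝ) = c * aR i := by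
      intro i
      have := congrFun h i
      simp only [Pi.sub_apply, Pi.smul_apply, smul_eq_mul, Pi.zero_apply, sub_eq_zero] at this
      exact this
    -- cross proportionality over ℤ
    have hcross : ∀ i, w i * a i0 = w i0 * a i := by
      intro i
      have : ((w i * a i0 : ℤ) : ℝ) = ((w i0 * a i : ℤ) : ℝ) := by
        push_cast
        rw [hwc i, hwc i0]; ring
      exact_mod_cast this
    -- derive integer k
    set g : ℕ := Int.gcd (w i0) (a i0) with hg
    have hgne : (g : ℤ) ≠ 0 := by
      simp [hg, Int.gcd_eq_zero_iff]
      intro _; exact hi0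
    set p : ℤ := w i0 / g with hp
    set q : ℤ := a i0 / g with hq
    have hpg : w i0 = g * p := (Int.ediv_mul_cancel (Int.gcd_dvd_left _ _)).symm.trans (mul_comm _ _)
    have hqg : a i0 = g * q := (Int.ediv_mul_cancel (Int.gcd_dvd_right _ _)).symm.trans (mul_comm _ _)
    have hpq : IsCoprime p q := by
      rw [hp, hq, hg]
      exact Int.isCoprime_iff_gcd_eq_one.2 (Int.gcd_div_gcd_div_gcd (Int.gcd_pos_of_ne_zero_right _ hi0))
    have hqdvd : ∀ i, q ∣ a i := by
      intro i
      have h1 : w i * (g * q) = g * p * a i := by rw [← hpg, ← hqg]; exact hcross i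
      have h2 : q * w i = p * a i := by
        apply mul_left_cancel₀ hgne
        linear_combination h1
      have : q ∣ p * a i := ⟨w i, h2.symm⟩
      exact (IsCoprime.symm hpq).dvd_of_dvd_mul_left this
    have hq1 : q ∣ 1 := by
      rw [← hgcd]
      exact Finset.dvd_gcd fun i _ => hqdvd i
    have hqa : a i0 ∣ w i0 := by
      rcases isUnit_of_dvd_one hq1 with h
      have : IsUnit q := isUnit_of_dvd_one hq1
      rcases Int.isUnit_iff.1 this with h1 | h1
      · rw [hqg, h1, mul_one, hpg]; exact ⟨p, rfl⟩
      · rw [hqg, h1, hpg]; exact ⟨-p, by ring⟩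
    obtain ⟨k, hk⟩ := hqa
    refine ⟨k, funext fun i => ?_⟩
    rw [hsnoc k i, Pi.zero_apply, sub_eq_zero]
    have : w i * a i0 = k * a i * a i0 := by
      rw [hcross i, hk]; ring
    exact mul_right_cancel₀ hi0 this
  · rintro ⟨k, hk⟩
    have hwk : ∀ i, w i = k * a i := by
      intro i
      have := congrFun hk i
      rw [hsnoc k i, Pi.zero_apply] at this
      linarith [this]
    have hwRc : ∀ i, (w i : ℝ) = (k : ℝ) * aR i := by
      intro i; show (w i : ℝ) = (k:ℝ) * (a i : ℝ)
      exact_mod_cast congrArg (Int.cast : ℤ → ℝ) (hwk i)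
    funext i
    simp only [Pi.sub_apply, Pi.smul_apply, smul_eq_mul, Pi.zero_apply]
    have hsum : ∑ j, aR j * ((w j : ℝ)) = (k:ℝ) * ∑ j, aR j * aR j := by
      rw [Finset.mul_sum]
      exact Finset.sum_congr rfl fun j _ => by rw [hwRc j]; ring
    rw [hwRc i, hsum]
    field_simp
    have hs' : (∑ x, aR x ^ 2) ≠ 0 := by simpa [sq] using hs.ne'
    rw [div_self hs', sub_self, mul_zero]
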